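/- Let X be a compact Hausdorff space and D ⊆ ℂ the closed unit disk. Then the algebra C(X) of continuous complex-valued functions on X is the filtered colimit of its subalgebras generated by finite subsets of C(X, D), and the natural map π : colim_{F} C(P_F) → C(X) is a split surjection of ℂ-algebras, where for each finite F ⊆ C(X, D), Y_F ⊆ ℂ^F is the Zariski closure of the image of α_F : X → ℂ^F, x ↦ (f(x))_{f∈F}, and P_F = D^F ∩ Y_F is a compact polyhedron containing α_F(X). -/

import Mathlib

def Pol (X : Type) [TopologicalSpace X] (s : Finset C(X, ℂ)) : Set (↥s → ℂ) :=
  {y | (∀ p : MvPolynomial (↥s) ℂ,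
          (∀ x : X, MvPolynomial.eval (fun f : ↥s => (f.1 : C(X, ℂ)) x) p = 0) →
          MvPolynomial.eval y p = 0) ∧
       ∀ f : ↥s, ‖y f‖ ≤ 1}

noncomputable section StmtAux

variable {X : Type} [TopologicalSpace X]

/-- Evaluation at a point as an algebra hom. -/
def evAlg (Y : Type) [TopologicalSpace Y] (y : Y) : C(Y, ℂ) →ₐ[ℂ] ℂ where
  toFun h := h y
  map_one' := rfl
  map_mul' _ _ := rfl
  map_zero' := rfl
  map_add' _ _ := rfl
  commutes' _ := rfl

/-- Coordinate functions on the polyhedron. -/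
def coordFun (s : Finset C(X, ℂ)) (f : ↥s) : C(Pol X s, ℂ) :=
  ⟨fun y => y.1 f, by
    exact (continuous_apply f).comp continuous_subtype_val⟩

def phiMap (s : Finset C(X, ℂ)) : MvPolynomial (↥s) ℂ →ₐ[ℂ] C(Pol X s, ℂ) :=
  MvPolynomial.aeval (coordFun s)

def psiMap (s : Finset C(X, ℂ)) : MvPolynomial (↥s) ℂ →ₐ[ℂ] C(X, ℂ) :=
  MvPolynomial.aeval (fun f : ↥s => (f.1 : C(X, ℂ)))

lemma phiMap_apply (s : Finset C(X, ℂ)) (p : MvPolynomial (↥s) ℂ) (y : Pol X s) :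
    phiMap s p y = MvPolynomial.eval y.1 p := by
  have h1 : (evAlg (Pol X s) y).comp (MvPolynomial.aeval (coordFun s)) =
      MvPolynomial.aeval (fun f : ↥s => (coordFun s f) y) :=
    MvPolynomial.comp_aeval _ _
  have h2 : (evAlg (Pol X s) y) (phiMap s p) =
      MvPolynomial.aeval (fun f : ↥s => (coordFun s f) y) p := by
    rw [phiMap, ← h1]; rfl
  have h3 : (fun f : ↥s => (coordFun s f) y) = y.1 := rfl
  rw [h3] at h2
  have h4 : MvPolynomial.aeval y.1 p = MvPolynomial.eval y.1 p :=
    DFunLike.congr_fun (MvPolynomial.coe_aeval_eq_eval _) p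
  rw [← h4]
  exact h2

lemma psiMap_apply (s : Finset C(X, ℂ)) (p : MvPolynomial (↥s) ℂ) (x : X) :
    psiMap s p x = MvPolynomial.eval (fun f : ↥s => (f.1 : C(X, ℂ)) x) p := by
  have h1 : (evAlg X x).comp (MvPolynomial.aeval (fun f : ↥s => (f.1 : C(X, ℂ)))) =
      MvPolynomial.aeval (fun f : ↥s => (f.1 : C(X, ℂ)) x) :=
    MvPolynomial.comp_aeval _ _
  have h2 : (evAlg X x) (psiMap s p) =
      MvPolynomial.aeval (fun f : ↥s => (f.1 : C(X, ℂ)) x) p := by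
    rw [psiMap, ← h1]; rfl
  have h4 : MvPolynomial.aeval (fun f : ↥s => (f.1 : C(X, ℂ)) x) p =
      MvPolynomial.eval (fun f : ↥s => (f.1 : C(X, ℂ)) x) p :=
    DFunLike.congr_fun (MvPolynomial.coe_aeval_eq_eval _) p
  rw [← h4]
  exact h2

lemma exists_beta (s : Finset C(X, ℂ)) :
    ∃ β : (Algebra.adjoin ℂ (↑s : Set C(X, ℂ))) →ₐ[ℂ] C(Pol X s, ℂ),
      ∀ (g : Algebra.adjoin ℂ (↑s : Set C(X, ℂ))) (y : Pol X s) (x : X),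
        (fun f : ↥s => (f.1 : C(X, ℂ)) x) = y.1 → (β g) y = (g : C(X, ℂ)) x := by
  classical
  set ψ := psiMap (X := X) s with hψ
  have hker : ∀ a ∈ RingHom.ker ψ.rangeRestrict, phiMap s a = 0 := by
    intro p hp
    have hψp : ψ p = 0 := by
      have h0 : ψ.rangeRestrict p = 0 := RingHom.mem_ker.mp hp
      have : (ψ.rangeRestrict p : C(X, ℂ)) = 0 := by rw [h0]; rfl
      simpa using this
    ext y
    rw [phiMap_apply]
    refine y.2.1 p ?_
    intro x
    have hx := congrArg (fun h : C(X, ℂ) => h x) hψp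
    simp only [ContinuousMap.zero_apply] at hx
    rw [← psiMap_apply s p x]
    exact hx
  have hsurj : Function.Surjective ψ.rangeRestrict := ψ.rangeRestrict_surjective
  let e := Ideal.quotientKerAlgEquivOfSurjective hsurj
  let lift := Ideal.Quotient.liftₐ _ (phiMap s) hker
  have hadj : Algebra.adjoin ℂ (↑s : Set C(X, ℂ)) = ψ.range := by
    rw [hψ]; exact Algebra.adjoin_eq_range ℂ _
  let ι := (Subalgebra.equivOfEq _ _ hadj).toAlgHom
  refine ⟨lift.comp ((e.symm.toAlgHom).comp ι), ?_⟩
  intro g y x hx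
  obtain ⟨p, hp⟩ := hsurj (ι g)
  have he : e.symm (ι g) = Ideal.Quotient.mk _ p := by
    apply e.injective
    rw [AlgEquiv.apply_symm_apply, ← hp]
    have : e (Ideal.Quotient.mk _ p) =
        Ideal.kerLiftAlg ψ.rangeRestrict (Ideal.Quotient.mk _ p) := rfl
    rw [this, Ideal.kerLiftAlg_mk]
  have hval : ψ p = (g : C(X, ℂ)) := by
    have := congrArg Subtype.val hp
    exact this
  have hcomp : (lift.comp ((e.symm.toAlgHom).comp ι)) g = lift (e.symm (ι g)) := rfl
  rw [hcomp, he]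
  have hl : lift (Ideal.Quotient.mk _ p) = phiMap s p := by
    simp only [lift, Ideal.Quotient.liftₐ_apply]
    exact Ideal.Quotient.lift_mk _ _ _
  rw [hl, phiMap_apply, ← hx]
  have hvx := congrArg (fun h : C(X, ℂ) => h x) hval
  rw [← psiMap_apply s p x]
  exact hvx

end StmtAux

theorem stmt_11 (X : Type) [TopologicalSpace X] [CompactSpace X] [T2Space X] :
    -- (1)
    (∀ g : C(X, ℂ), ∃ s : Finset C(X, ℂ),
      (∀ f ∈ s, ∀ x : X, ‖f x‖ ≤ 1) ∧
      g ∈ Algebra.adjoin ℂ (↑s : Set C(X, ℂ))) ∧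
    -- (2)
    (∀ s : Finset C(X, ℂ), (∀ f ∈ s, ∀ x : X, ‖f x‖ ≤ 1) →
      IsCompact (Pol X s) ∧
      ∀ x : X, (fun f : ↥s => (f.1 : C(X, ℂ)) x) ∈ Pol X s) ∧
    -- (3) surjectivity of `π` …
    (∀ g : C(X, ℂ), ∃ s : Finset C(X, ℂ),
      ∃ hb : ∀ f ∈ s, ∀ x : X, ‖f x‖ ≤ 1,
      ∃ h : C(Pol X s, ℂ), ∀ x : X,
        h ⟨fun f : ↥s => (f.1 : C(X, ℂ)) x,
            ⟨fun p hp => hp x, fun f => hb f.1 f.2 x⟩⟩ = g x) ∧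
    -- … and the algebra sections `β_s` splitting it:
    (∀ s : Finset C(X, ℂ),
      ∀ hb : ∀ f ∈ s, ∀ x : X, ‖f x‖ ≤ 1,
      ∃ β : (Algebra.adjoin ℂ (↑s : Set C(X, ℂ))) →ₐ[ℂ] C(Pol X s, ℂ),
        ∀ (g : Algebra.adjoin ℂ (↑s : Set C(X, ℂ))) (x : X),
          (β g) ⟨fun f : ↥s => (f.1 : C(X, ℂ)) x,
              ⟨fun p hp => hp x, fun f => hb f.1 f.2 x⟩⟩ = (g : C(X, ℂ)) x) := by
  have part1 : ∀ g : C(X, ℂ), ∃ s : Finset C(X, ℂ),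
      (∀ f ∈ s, ∀ x : X, ‖f x‖ ≤ 1) ∧
      g ∈ Algebra.adjoin ℂ (↑s : Set C(X, ℂ)) := by
    intro g
    set c : ℝ := ‖g‖ + 1 with hc
    have hc0 : (0 : ℝ) < c := by positivity
    set f : C(X, ℂ) := ((c⁻¹ : ℂ)) • g with hf
    refine ⟨{f}, ?_, ?_⟩
    · intro f' hf' x
      rw [Finset.mem_singleton] at hf'
      subst hf'
      have hgx : ‖g x‖ ≤ ‖g‖ := g.norm_coe_le_norm x
      have hfx : ‖f x‖ = c⁻¹ * ‖g x‖ := by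
        rw [hf, ContinuousMap.smul_apply, norm_smul, norm_inv, Complex.norm_real,
          Real.norm_of_nonneg hc0.le]
      rw [hfx, inv_mul_le_iff₀ hc0, mul_one]
      linarith
    · have hfmem : f ∈ Algebra.adjoin ℂ (↑({f} : Finset C(X, ℂ)) : Set C(X, ℂ)) :=
        Algebra.subset_adjoin (by simp)
      have : g = (c : ℂ) • f := by
        rw [hf, smul_smul, mul_inv_cancel₀ (by exact_mod_cast hc0.ne'), one_smul]
      rw [this]
      exact Subalgebra.smul_mem _ hfmem _
  have part2 : ∀ s : Finset C(X, ℂ), (∀ f ∈ s, ∀ x : X, ‖f x‖ ≤ 1) →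
      IsCompact (Pol X s) ∧
      ∀ x : X, (fun f : ↥s => (f.1 : C(X, ℂ)) x) ∈ Pol X s := by
    intro s hb
    constructor
    · have hsub : Pol X s ⊆ Set.pi Set.univ (fun _ : ↥s => Metric.closedBall (0 : ℂ) 1) := by
        intro y hy f _
        simpa [Complex.dist_eq] using hy.2 f
      have hcomp : IsCompact (Set.pi Set.univ (fun _ : ↥s => Metric.closedBall (0 : ℂ) 1)) :=
        isCompact_univ_pi (fun _ => isCompact_closedBall 0 1)
      have hclosed : IsClosed (Pol X s) := by
        have h1 : IsClosed {y : ↥s → ℂ | ∀ p : MvPolynomial (↥s) ℂ,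
            (∀ x : X, MvPolynomial.eval (fun f : ↥s => (f.1 : C(X, ℂ)) x) p = 0) →
            MvPolynomial.eval y p = 0} := by
          rw [Set.setOf_forall]
          refine isClosed_iInter fun p => ?_
          by_cases hp : ∀ x : X, MvPolynomial.eval (fun f : ↥s => (f.1 : C(X, ℂ)) x) p = 0
          · have hs : {y : ↥s → ℂ |
                (∀ x : X, MvPolynomial.eval (fun f : ↥s => (f.1 : C(X, ℂ)) x) p = 0) →
                MvPolynomial.eval y p = 0} = {y : ↥s → ℂ | MvPolynomial.eval y p = 0} := by
              ext y; exact ⟨fun h => h hp, fun h _ => h⟩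
            rw [hs]
            exact isClosed_eq (MvPolynomial.continuous_eval p) continuous_const
          · have hs : {y : ↥s → ℂ |
                (∀ x : X, MvPolynomial.eval (fun f : ↥s => (f.1 : C(X, ℂ)) x) p = 0) →
                MvPolynomial.eval y p = 0} = Set.univ := by
              ext y
              simp only [Set.mem_setOf_eq, Set.mem_univ, iff_true]
              exact fun h => absurd h hp
            rw [hs]
            exact isClosed_univ
        have h2 : IsClosed {y : ↥s → ℂ | ∀ f : ↥s, ‖y f‖ ≤ 1} := by
          rw [Set.setOf_forall]
          refine isClosed_iInter fun f => ?_
          exact isClosed_le ((continuous_norm).comp (continuous_apply f)) continuous_const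
        exact h1.inter h2
      exact hcomp.of_isClosed_subset hclosed hsub
    · intro x
      exact ⟨fun p hp => hp x, fun f => hb f.1 f.2 x⟩
  refine ⟨part1, part2, ?_, ?_⟩
  · intro g
    obtain ⟨s, hb, hmem⟩ := part1 g
    obtain ⟨β, hβ⟩ := exists_beta (X := X) s
    exact ⟨s, hb, β ⟨g, hmem⟩, fun x => hβ ⟨g, hmem⟩ _ x rfl⟩
  · intro s hb
    obtain ⟨β, hβ⟩ := exists_beta (X := X) s
    exact ⟨β, fun g x => hβ g _ x rfl⟩
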